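/- arXiv:1307.3000 — 2 statements merged into one kernel-verified Lean document; each statement's English description precedes it below -/
import Mathlib

section
/- In the Gibbs–Poisson allocation model, the number P_{n,k} of nonempty boxes satisfies P(P_{n,k} = p) = ({n}_p / σ_k(nθ)) · B_{k,p}(σ_•(θ)) for p = 1,...,min(n,k), where {n}_p = n!/(n-p)! and B_{k,p}(σ_•(θ)) = (k!/p!) Σ_{k_1+...+k_p=k, k_q≥1} ∏_q σ_{k_q}(θ)/k_q!. -/
open Finset

/-- The local exponential generating function `φ(x) = Σ_{m≥1} (φ_m/m!) x^m`
as a formal power series. -/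
noncomputable def phiPS (φ : ℕ → ℝ) : PowerSeries ℝ :=
  PowerSeries.mk fun m => if m = 0 then 0 else φ m / m.factorial

/-- `σ_k(θ) := k! [x^k] exp(θ φ(x))`, where the coefficient of the composed
exponential is computed termwise (φ has zero constant term, so only `l ≤ k`
contribute). -/
noncomputable def sigmaP (φ : ℕ → ℝ) (k : ℕ) (θ : ℝ) : ℝ :=
  (k.factorial : ℝ) *
    ∑ l ∈ Finset.range (k + 1),
      θ ^ l / l.factorial * PowerSeries.coeff k (phiPS φ ^ l)

lemma coeff_phiPS_nonneg (φ : ℕ → ℝ) (hφ : ∀ m, 0 ≤ φ m) (m : ℕ) :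
    0 ≤ PowerSeries.coeff m (phiPS φ) := by
  simp only [phiPS, PowerSeries.coeff_mk]
  split
  · exact le_refl 0
  · exact div_nonneg (hφ _) (by positivity)

lemma coeff_pow_nonneg {f : PowerSeries ℝ} (h : ∀ m, 0 ≤ PowerSeries.coeff m f)
    (l k : ℕ) : 0 ≤ PowerSeries.coeff k (f ^ l) := by
  rw [PowerSeries.coeff_pow]
  exact Finset.sum_nonneg fun d _ => Finset.prod_nonneg fun i _ => h _

lemma coeff_phiPS_pow_eq_zero (φ : ℕ → ℝ) {k l : ℕ} (h : k < l) :
    PowerSeries.coeff k (phiPS φ ^ l) = 0 := by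
  have hX : (PowerSeries.X : PowerSeries ℝ) ∣ phiPS φ := by
    rw [PowerSeries.X_dvd_iff]
    simp [phiPS, PowerSeries.constantCoeff_mk]
  exact (PowerSeries.X_pow_dvd_iff.mp (pow_dvd_pow_of_dvd hX l)) k h

noncomputable def Egf (φ : ℕ → ℝ) (θ : ℝ) : PowerSeries ℝ :=
  PowerSeries.mk fun k => ∑ l ∈ Finset.range (k + 1),
    θ ^ l / l.factorial * PowerSeries.coeff k (phiPS φ ^ l)

lemma sigmaP_eq (φ : ℕ → ℝ) (k : ℕ) (θ : ℝ) :
    sigmaP φ k θ = (k.factorial : ℝ) * PowerSeries.coeff k (Egf φ θ) := by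
  rw [sigmaP, Egf, PowerSeries.coeff_mk]

lemma coeff_Egf_eq (φ : ℕ → ℝ) (θ : ℝ) {k N : ℕ} (h : k ≤ N) :
    PowerSeries.coeff k (Egf φ θ) = ∑ l ∈ Finset.range (N + 1),
      θ ^ l / l.factorial * PowerSeries.coeff k (phiPS φ ^ l) := by
  rw [Egf, PowerSeries.coeff_mk]
  apply Finset.sum_subset
  · intro l hl; simp only [Finset.mem_range] at *; omega
  · intro l hl hl2
    simp only [Finset.mem_range] at hl hl2
    rw [coeff_phiPS_pow_eq_zero φ (show k < l by omega)]
    ring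

lemma triangle_sum (N : ℕ) (f : ℕ → ℕ → ℝ) (hf : ∀ l m, N ≤ l + m → f l m = 0) :
    ∑ lm ∈ Finset.range N ×ˢ Finset.range N, f lm.1 lm.2
      = ∑ r ∈ Finset.range N, ∑ lm ∈ Finset.HasAntidiagonal.antidiagonal r, f lm.1 lm.2 := by
  have hset : (Finset.range N ×ˢ Finset.range N).filter (fun lm => lm.1 + lm.2 < N)
      = (Finset.range N).biUnion (fun r => Finset.HasAntidiagonal.antidiagonal r) := by
    ext lm
    simp only [Finset.mem_filter, Finset.mem_product, Finset.mem_range, Finset.mem_biUnion,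
      Finset.HasAntidiagonal.mem_antidiagonal]
    constructor
    · rintro ⟨⟨_, _⟩, h⟩
      exact ⟨lm.1 + lm.2, h, rfl⟩
    · rintro ⟨r, hr, h⟩
      omega
  rw [← Finset.sum_filter_of_ne (p := fun lm => lm.1 + lm.2 < N)
    (by intro lm _ h; by_contra hc; exact h (hf _ _ (by omega))), hset,
    Finset.sum_biUnion]
  intro a _ b _ hab
  simp only [Finset.disjoint_left, Finset.HasAntidiagonal.mem_antidiagonal]
  rintro lm h1 h2
  exact hab (h1 ▸ h2)

lemma Egf_mul (φ : ℕ → ℝ) (θ₁ θ₂ : ℝ) : Egf φ θ₁ * Egf φ θ₂ = Egf φ (θ₁ + θ₂) := by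
  ext k
  rw [PowerSeries.coeff_mul]
  have key : ∀ lm : ℕ × ℕ, lm ∈ Finset.range (k+1) ×ˢ Finset.range (k+1) → True := fun _ _ => trivial
  -- LHS to canonical sum
  have hL : ∑ ab ∈ Finset.HasAntidiagonal.antidiagonal k,
      PowerSeries.coeff ab.1 (Egf φ θ₁) * PowerSeries.coeff ab.2 (Egf φ θ₂)
      = ∑ lm ∈ Finset.range (k+1) ×ˢ Finset.range (k+1),
          θ₁ ^ lm.1 / lm.1.factorial * θ₂ ^ lm.2 / lm.2.factorial
            * PowerSeries.coeff k (phiPS φ ^ (lm.1 + lm.2)) := by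
    have : ∀ ab ∈ Finset.HasAntidiagonal.antidiagonal k,
        PowerSeries.coeff ab.1 (Egf φ θ₁) * PowerSeries.coeff ab.2 (Egf φ θ₂)
        = ∑ lm ∈ Finset.range (k+1) ×ˢ Finset.range (k+1),
            θ₁ ^ lm.1 / lm.1.factorial * θ₂ ^ lm.2 / lm.2.factorial
              * (PowerSeries.coeff ab.1 (phiPS φ ^ lm.1)
                  * PowerSeries.coeff ab.2 (phiPS φ ^ lm.2)) := by
      intro ab hab
      rw [Finset.HasAntidiagonal.mem_antidiagonal] at hab
      rw [coeff_Egf_eq φ θ₁ (N := k) (by omega), coeff_Egf_eq φ θ₂ (N := k) (by omega),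
        Finset.sum_mul_sum, ← Finset.sum_product']
      apply Finset.sum_congr rfl
      intro lm _
      ring
    rw [Finset.sum_congr rfl this, Finset.sum_comm]
    apply Finset.sum_congr rfl
    intro lm _
    rw [← Finset.mul_sum, pow_add, PowerSeries.coeff_mul]
  rw [hL]
  -- RHS
  rw [Egf, PowerSeries.coeff_mk]
  rw [triangle_sum (k+1) (fun l m => θ₁ ^ l / l.factorial * θ₂ ^ m / m.factorial
      * PowerSeries.coeff k (phiPS φ ^ (l + m))) (by
    intro l m h
    rw [coeff_phiPS_pow_eq_zero φ (show k < l + m by omega)]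
    ring)]
  apply Finset.sum_congr rfl
  intro r hr
  rw [Finset.mem_range] at hr
  rw [add_pow]
  rw [Finset.sum_div, Finset.sum_mul, Finset.Nat.sum_antidiagonal_eq_sum_range_succ_mk]
  apply Finset.sum_congr rfl
  intro l hl
  rw [Finset.mem_range] at hl
  have h1 : (l + (r - l)) = r := by omega
  rw [h1]
  have h2 : (r.choose l : ℝ) = r.factorial / (l.factorial * (r - l).factorial) := by
    rw [Nat.choose_eq_factorial_div_factorial (by omega)]
    rw [Nat.cast_div (Nat.factorial_mul_factorial_dvd_factorial (by omega)) (by positivity)]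
    push_cast; ring
  rw [h2]
  have : (r.factorial : ℝ) ≠ 0 := by positivity
  field_simp

lemma Egf_zero (φ : ℕ → ℝ) : Egf φ 0 = 1 := by
  ext k
  rw [Egf, PowerSeries.coeff_mk, Finset.sum_eq_single 0]
  · simp [PowerSeries.coeff_one]
  · intro l _ hl
    rw [zero_pow hl]; ring
  · simp

lemma Egf_pow (φ : ℕ → ℝ) (θ : ℝ) (n : ℕ) : Egf φ θ ^ n = Egf φ (n * θ) := by
  induction n with
  | zero => simp [Egf_zero]
  | succ n ih =>
    rw [pow_succ, ih, Egf_mul]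
    norm_num
    ring_nf


lemma sum_antidiagonalTuple_prod_coeff (f : PowerSeries ℝ) (n k : ℕ) :
    ∑ kv ∈ Finset.Nat.antidiagonalTuple n k, ∏ i, PowerSeries.coeff (kv i) f
      = PowerSeries.coeff k (f ^ n) := by
  have h1 : f ^ n = ∏ _i : Fin n, f := by simp
  rw [h1, PowerSeries.coeff_prod]
  apply Finset.sum_nbij' (fun kv => (Finsupp.equivFunOnFinite.symm kv : Fin n →₀ ℕ))
    (fun l => ⇑l)
  · intro kv hkv
    rw [Finset.Nat.mem_antidiagonalTuple] at hkv
    rw [Finset.mem_finsuppAntidiag]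
    exact ⟨by simpa using hkv, Finset.subset_univ _⟩
  · intro l hl
    rw [Finset.mem_finsuppAntidiag] at hl
    rw [Finset.Nat.mem_antidiagonalTuple]
    simpa using hl.1
  · intro kv _; rfl
  · intro l _; exact Finsupp.equivFunOnFinite_symm_coe l
  · intro kv _
    apply Finset.prod_congr rfl
    intro i _
    rfl

lemma sum_support_card_eq (n p k : ℕ) (c : ℕ → ℝ) (hc0 : c 0 = 1) :
    ∑ kv ∈ (Finset.Nat.antidiagonalTuple n k).filter
        (fun kv => (Finset.univ.filter fun i => 0 < kv i).card = p),
      ∏ i, c (kv i)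
    = (n.choose p : ℝ) *
      ∑ w ∈ (Finset.Nat.antidiagonalTuple p k).filter (fun w => ∀ q, 0 < w q),
        ∏ q, c (w q) := by
  classical
  rw [← Finset.sum_fiberwise_of_maps_to
    (g := fun kv : Fin n → ℕ => Finset.univ.filter fun i => 0 < kv i)
    (t := Finset.powersetCard p Finset.univ)
    (fun kv hkv => by
      rw [Finset.mem_filter] at hkv
      rw [Finset.mem_powersetCard]
      exact ⟨Finset.subset_univ _, hkv.2⟩)]
  rw [Finset.sum_congr rfl (g := fun _ => ∑ w ∈ (Finset.Nat.antidiagonalTuple p k).filter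
      (fun w => ∀ q, 0 < w q), ∏ q, c (w q)) ?_]
  · rw [Finset.sum_const, Finset.card_powersetCard, Finset.card_univ, Fintype.card_fin,
      nsmul_eq_mul]
  intro S hS
  rw [Finset.mem_powersetCard] at hS
  obtain ⟨-, hScard⟩ := hS
  have e : {i // i ∈ S} ≃ Fin p :=
    Fintype.equivFinOfCardEq (by rw [Fintype.card_coe]; exact hScard)
  refine Finset.sum_nbij' (fun kv q => kv (e.symm q))
    (fun w i => if h : i ∈ S then w (e ⟨i, h⟩) else 0) ?_ ?_ ?_ ?_ ?_
  · -- maps to t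
    intro kv hkv
    simp only [Finset.mem_filter, Finset.Nat.mem_antidiagonalTuple] at hkv ⊢
    obtain ⟨⟨hsum, -⟩, hsupp⟩ := hkv
    have hmem : ∀ i, 0 < kv i ↔ i ∈ S := by
      intro i
      rw [← hsupp]
      simp
    constructor
    · calc ∑ q, kv (e.symm q)
          = ∑ a : {i // i ∈ S}, (fun a : {i // i ∈ S} => kv ↑a) a :=
            Equiv.sum_comp e.symm (fun a : {i // i ∈ S} => kv ↑a)
        _ = ∑ i ∈ S, kv i := Finset.sum_coe_sort S _
        _ = ∑ i, kv i := Finset.sum_subset (Finset.subset_univ S)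
            (fun i _ hi => by
              have h2 : ¬ 0 < kv i := fun hlt => hi ((hmem i).mp hlt)
              omega)
        _ = k := hsum
    · intro q
      exact (hmem _).mpr (e.symm q).2
  · -- maps to s
    intro w hw
    simp only [Finset.mem_filter, Finset.Nat.mem_antidiagonalTuple] at hw ⊢
    obtain ⟨hsum, hpos⟩ := hw
    have hsupp : (Finset.univ.filter fun i => 0 < if h : i ∈ S then w (e ⟨i, h⟩) else 0) = S := by
      ext i
      simp only [Finset.mem_filter, Finset.mem_univ, true_and]
      constructor
      · intro h
        by_contra hi
        rw [dif_neg hi] at h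
        omega
      · intro hi
        rw [dif_pos hi]
        exact hpos _
    refine ⟨⟨?_, by rw [hsupp, hScard]⟩, hsupp⟩
    calc ∑ i, (if h : i ∈ S then w (e ⟨i, h⟩) else 0)
        = ∑ i ∈ S, (if h : i ∈ S then w (e ⟨i, h⟩) else 0) :=
          (Finset.sum_subset (Finset.subset_univ S)
            (fun i _ hi => dif_neg hi)).symm
      _ = ∑ a : {i // i ∈ S}, (if h : (a : Fin n) ∈ S then w (e ⟨↑a, h⟩) else 0) :=
          (Finset.sum_coe_sort S _).symm
      _ = ∑ a : {i // i ∈ S}, w (e a) := by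
          apply Finset.sum_congr rfl
          intro a _
          rw [dif_pos a.2]
      _ = ∑ q, w q := Equiv.sum_comp e w
      _ = k := hsum
  · -- left inverse
    intro kv hkv
    simp only [Finset.mem_filter] at hkv
    have hsupp := hkv.2
    have hmem : ∀ i, 0 < kv i ↔ i ∈ S := by
      intro i
      rw [← hsupp]
      simp
    funext i
    dsimp only
    by_cases hi : i ∈ S
    · rw [dif_pos hi, Equiv.symm_apply_apply]
    · rw [dif_neg hi]
      have h2 : ¬ 0 < kv i := fun hlt => hi ((hmem i).mp hlt)
      omega
  · -- right inverse
    intro w _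
    funext q
    dsimp only
    rw [dif_pos (e.symm q).2]
    congr 1
    rw [Subtype.coe_eta, Equiv.apply_symm_apply]
  · -- products agree
    intro kv hkv
    simp only [Finset.mem_filter] at hkv
    have hsupp := hkv.2
    have hmem : ∀ i, 0 < kv i ↔ i ∈ S := by
      intro i
      rw [← hsupp]
      simp
    calc ∏ i, c (kv i)
        = (∏ i ∈ S, c (kv i)) * ∏ i ∈ Sᶜ, c (kv i) :=
          (Finset.prod_mul_prod_compl S _).symm
      _ = (∏ i ∈ S, c (kv i)) * 1 := by
          congr 1
          apply Finset.prod_eq_one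
          intro i hi
          rw [Finset.mem_compl] at hi
          have hz : kv i = 0 := by
            have h2 : ¬ 0 < kv i := fun hlt => hi ((hmem i).mp hlt)
            omega
          rw [hz, hc0]
      _ = ∏ i ∈ S, c (kv i) := mul_one _
      _ = ∏ a : {i // i ∈ S}, (fun a : {i // i ∈ S} => c (kv ↑a)) a :=
          (Finset.prod_coe_sort S _).symm
      _ = ∏ q, c (kv (e.symm q)) :=
          (Equiv.prod_comp e.symm (fun a : {i // i ∈ S} => c (kv ↑a))).symm


/-- The Bell exponential polynomial `B_{k,l}(φ_•) = (k!/l!) [x^k] φ(x)^l`. -/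
noncomputable def BellB (φ : ℕ → ℝ) (k l : ℕ) : ℝ :=
  ((k.factorial : ℝ) / l.factorial) * PowerSeries.coeff k (phiPS φ ^ l)

/-- `B_{k,p}(σ_•(θ)) = (k!/p!) Σ_{k_1+...+k_p=k, k_q ≥ 1} ∏_q σ_{k_q}(θ)/k_q!`. -/
noncomputable def BellSigma (φ : ℕ → ℝ) (θ : ℝ) (k p : ℕ) : ℝ :=
  ((k.factorial : ℝ) / p.factorial) *
    ∑ kv ∈ (Finset.Nat.antidiagonalTuple p k).filter (fun kv => ∀ q, 0 < kv q),
      ∏ q, sigmaP φ (kv q) θ / ((kv q).factorial : ℝ)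


section new
variable (φ : ℕ → ℝ) (θ : ℝ)

lemma coeff_zero_Egf : PowerSeries.coeff 0 (Egf φ θ) = 1 := by
  rw [Egf, PowerSeries.coeff_mk]
  simp

lemma coeff_Egf_nonneg (hφ : ∀ m, 0 ≤ φ m) (hθ : 0 ≤ θ) (j : ℕ) :
    0 ≤ PowerSeries.coeff j (Egf φ θ) := by
  rw [Egf, PowerSeries.coeff_mk]
  apply Finset.sum_nonneg
  intro l _
  have := coeff_pow_nonneg (coeff_phiPS_nonneg φ hφ) l j
  positivity

lemma coeff_phiPS_pow_self_pos (hφ1 : 0 < φ 1) (hφ : ∀ m, 0 ≤ φ m) (k : ℕ) :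
    0 < PowerSeries.coeff k (phiPS φ ^ k) := by
  rw [← sum_antidiagonalTuple_prod_coeff]
  have hmem : (fun _ : Fin k => 1) ∈ Finset.Nat.antidiagonalTuple k k := by
    rw [Finset.Nat.mem_antidiagonalTuple]
    simp
  have hval : ∏ _i : Fin k, PowerSeries.coeff 1 (phiPS φ) = (φ 1) ^ k := by
    have h1 : PowerSeries.coeff 1 (phiPS φ) = φ 1 := by
      rw [phiPS, PowerSeries.coeff_mk]
      simp
    rw [h1]
    simp
  calc (0 : ℝ) < (φ 1) ^ k := by positivity
    _ = ∏ _i : Fin k, PowerSeries.coeff 1 (phiPS φ) := hval.symm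
    _ ≤ ∑ kv ∈ Finset.Nat.antidiagonalTuple k k, ∏ i, PowerSeries.coeff (kv i) (phiPS φ) :=
      Finset.single_le_sum (f := fun kv : Fin k → ℕ => ∏ i, PowerSeries.coeff (kv i) (phiPS φ))
        (fun kv _ => Finset.prod_nonneg fun i _ => coeff_phiPS_nonneg φ hφ _) hmem

lemma coeff_Egf_pos (hφ1 : 0 < φ 1) (hφ : ∀ m, 0 ≤ φ m) (hθ : 0 < θ) (k : ℕ) :
    0 < PowerSeries.coeff k (Egf φ θ) := by
  rw [Egf, PowerSeries.coeff_mk]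
  have hterm : 0 < θ ^ k / k.factorial * PowerSeries.coeff k (phiPS φ ^ k) := by
    have := coeff_phiPS_pow_self_pos φ hφ1 hφ k
    positivity
  apply Finset.sum_pos'
  · intro l _
    have := coeff_pow_nonneg (coeff_phiPS_nonneg φ hφ) l k
    positivity
  · exact ⟨k, by simp, hterm⟩
end new

open MeasureTheory ProbabilityTheory

lemma meas_biUnion_tuples {Ω : Type*} [MeasurableSpace Ω] (P : Measure Ω)
    {n : ℕ} (ξ : Fin n → Ω → ℕ) (hmeas : ∀ i, Measurable (ξ i))
    (hindep : iIndepFun ξ P)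
    (T : Finset (Fin n → ℕ)) :
    P (⋃ kv ∈ T, ⋂ i, ξ i ⁻¹' {kv i}) = ∑ kv ∈ T, ∏ i, P (ξ i ⁻¹' {kv i}) := by
  rw [measure_biUnion_finset]
  · apply Finset.sum_congr rfl
    intro kv _
    exact hindep.meas_iInter (fun i => ⟨{kv i}, measurableSet_singleton _, rfl⟩)
  · intro kv _ kv' _ hne
    rw [Function.onFun, Set.disjoint_left]
    intro ω hω hω'
    simp only [Set.mem_iInter, Set.mem_preimage, Set.mem_singleton_iff] at hω hω'
    exact hne (funext fun i => (hω i).symm.trans (hω' i))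
  · intro kv _
    exact MeasurableSet.iInter fun i => hmeas i (measurableSet_singleton _)

theorem stmt7 {Ω : Type*} [MeasurableSpace Ω] (P : Measure Ω) [IsProbabilityMeasure P]
    (φ : ℕ → ℝ) (hφ1 : 0 < φ 1) (hφ : ∀ m, 0 ≤ φ m)
    (θ x Zθ : ℝ) (hθ : 0 < θ) (hx : 0 < x) (hZ : 0 < Zθ)
    (n : ℕ) (ξ : Fin n → Ω → ℕ)
    (hmeas : ∀ i, Measurable (ξ i))
    (hindep : iIndepFun ξ P)
    (hlaw : ∀ i j, P {ω | ξ i ω = j} =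
      ENNReal.ofReal (sigmaP φ j θ * x ^ j / (Zθ * j.factorial)))
    (k p : ℕ) (hp : 1 ≤ p) (hpn : p ≤ n) (hpk : p ≤ k) :
    ProbabilityTheory.cond P {ω | ∑ i, ξ i ω = k}
        {ω | (Finset.univ.filter fun i => 0 < ξ i ω).card = p} =
      ENNReal.ofReal ((n.descFactorial p : ℝ) / sigmaP φ k (n * θ) *
        BellSigma φ θ k p) := by
  classical
  have hn1 : 1 ≤ n := hp.trans hpn
  set A : Set Ω := {ω | ∑ i, ξ i ω = k} with hA
  set B : Set Ω := {ω | (Finset.univ.filter fun i => 0 < ξ i ω).card = p} with hB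
  have hmA : MeasurableSet A := by
    have hm : Measurable fun ω => ∑ i, ξ i ω := Finset.measurable_sum _ (fun i _ => hmeas i)
    exact hm (measurableSet_singleton k)
  -- event decompositions
  have hAdec : A = ⋃ kv ∈ Finset.Nat.antidiagonalTuple n k, ⋂ i, ξ i ⁻¹' {kv i} := by
    ext ω
    simp only [hA, Set.mem_setOf_eq, Set.mem_iUnion, Set.mem_iInter, Set.mem_preimage,
      Set.mem_singleton_iff, Finset.Nat.mem_antidiagonalTuple, exists_prop]
    constructor
    · intro h
      exact ⟨fun i => ξ i ω, h, fun i => rfl⟩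
    · rintro ⟨kv, hsum, hkv⟩
      rw [← hsum]
      exact Finset.sum_congr rfl fun i _ => hkv i
  have hABdec : A ∩ B = ⋃ kv ∈ (Finset.Nat.antidiagonalTuple n k).filter
      (fun kv => (Finset.univ.filter fun i => 0 < kv i).card = p),
      ⋂ i, ξ i ⁻¹' {kv i} := by
    ext ω
    simp only [hA, hB, Set.mem_inter_iff, Set.mem_setOf_eq, Set.mem_iUnion, Set.mem_iInter,
      Set.mem_preimage, Set.mem_singleton_iff, Finset.mem_filter,
      Finset.Nat.mem_antidiagonalTuple, exists_prop]
    constructor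
    · rintro ⟨h1, h2⟩
      exact ⟨fun i => ξ i ω, ⟨h1, h2⟩, fun i => rfl⟩
    · rintro ⟨kv, ⟨hsum, hcard⟩, hkv⟩
      constructor
      · rw [← hsum]
        exact Finset.sum_congr rfl fun i _ => hkv i
      · rw [← hcard]
        congr 1
        apply Finset.filter_congr
        intro i _
        rw [hkv i]
    -- done
  set c : ℕ → ℝ := fun j => PowerSeries.coeff j (Egf φ θ) with hcdef
  have hcnn : ∀ j, 0 ≤ c j := coeff_Egf_nonneg φ θ hφ hθ.le
  have hc0 : c 0 = 1 := coeff_zero_Egf φ θ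
  have hqr : ∀ j : ℕ, sigmaP φ j θ * x ^ j / (Zθ * j.factorial) = c j * x ^ j / Zθ := by
    intro j
    rw [sigmaP_eq]
    have : (j.factorial : ℝ) ≠ 0 := by positivity
    field_simp
    ring
  have hprod : ∀ kv : Fin n → ℕ, kv ∈ Finset.Nat.antidiagonalTuple n k →
      ∏ i, (c (kv i) * x ^ (kv i) / Zθ) = x ^ k / Zθ ^ n * ∏ i, c (kv i) := by
    intro kv hkv
    rw [Finset.Nat.mem_antidiagonalTuple] at hkv
    calc ∏ i, (c (kv i) * x ^ kv i / Zθ)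
        = (∏ i, c (kv i)) * ((∏ i, x ^ kv i) * ∏ _i : Fin n, Zθ⁻¹) := by
          rw [← Finset.prod_mul_distrib, ← Finset.prod_mul_distrib]
          exact Finset.prod_congr rfl fun i _ => by ring
      _ = (∏ i, c (kv i)) * (x ^ k * (Zθ⁻¹) ^ n) := by
          rw [Finset.prod_pow_eq_pow_sum, hkv, Finset.prod_const, Finset.card_univ,
            Fintype.card_fin]
      _ = x ^ k / Zθ ^ n * ∏ i, c (kv i) := by
          rw [inv_pow]
          ring
  have hmeasU : ∀ T : Finset (Fin n → ℕ), T ⊆ Finset.Nat.antidiagonalTuple n k →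
      P (⋃ kv ∈ T, ⋂ i, ξ i ⁻¹' {kv i})
        = ENNReal.ofReal (x ^ k / Zθ ^ n * ∑ kv ∈ T, ∏ i, c (kv i)) := by
    intro T hT
    rw [meas_biUnion_tuples P ξ hmeas hindep T]
    have hterm : ∀ kv ∈ T, ∏ i, P (ξ i ⁻¹' {kv i})
        = ENNReal.ofReal (x ^ k / Zθ ^ n * ∏ i, c (kv i)) := by
      intro kv hkv
      have h1 : ∀ i, P (ξ i ⁻¹' {kv i}) = ENNReal.ofReal (c (kv i) * x ^ (kv i) / Zθ) := by
        intro i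
        have : ξ i ⁻¹' {kv i} = {ω | ξ i ω = kv i} := rfl
        rw [this, hlaw i (kv i), hqr]
      rw [Finset.prod_congr rfl (fun i _ => h1 i),
        ← ENNReal.ofReal_prod_of_nonneg (fun i _ => by
          have := hcnn (kv i)
          positivity),
        hprod kv (hT hkv)]
    rw [Finset.sum_congr rfl hterm,
      ← ENNReal.ofReal_sum_of_nonneg (fun kv _ => by
        have : 0 ≤ ∏ i, c (kv i) := Finset.prod_nonneg fun i _ => hcnn _
        positivity),
      ← Finset.mul_sum]
  -- measure of A
  have hSall : ∑ kv ∈ Finset.Nat.antidiagonalTuple n k, ∏ i, c (kv i)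
      = sigmaP φ k (n * θ) / k.factorial := by
    rw [hcdef]
    rw [sum_antidiagonalTuple_prod_coeff (Egf φ θ) n k, Egf_pow,
      sigmaP_eq φ k (n * θ)]
    have : (k.factorial : ℝ) ≠ 0 := by positivity
    field_simp
  have hPA : P A = ENNReal.ofReal (x ^ k / Zθ ^ n * (sigmaP φ k (n * θ) / k.factorial)) := by
    rw [hAdec, hmeasU _ (le_refl _), hSall]
  set Spos : ℝ := ∑ w ∈ (Finset.Nat.antidiagonalTuple p k).filter (fun w => ∀ q, 0 < w q),
      ∏ q, c (w q) with hSposdef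
  have hPAB : P (A ∩ B) = ENNReal.ofReal (x ^ k / Zθ ^ n * ((n.choose p : ℝ) * Spos)) := by
    rw [hABdec, hmeasU _ (Finset.filter_subset _ _), sum_support_card_eq n p k c hc0]
  have hSposnn : 0 ≤ Spos :=
    Finset.sum_nonneg fun w _ => Finset.prod_nonneg fun q _ => hcnn _
  -- positivity of sigmaP φ k (n θ)
  have hnθ : (0:ℝ) < n * θ := by
    have : (1:ℝ) ≤ n := by exact_mod_cast hn1
    nlinarith
  have hσpos : 0 < sigmaP φ k (n * θ) := by
    rw [sigmaP_eq]
    have h1 := coeff_Egf_pos φ (n * θ) hφ1 hφ hnθ k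
    positivity
  -- Bell identity
  have hBell : BellSigma φ θ k p = (k.factorial : ℝ) / p.factorial * Spos := by
    rw [BellSigma, hSposdef]
    congr 1
    apply Finset.sum_congr rfl
    intro w _
    apply Finset.prod_congr rfl
    intro q _
    rw [sigmaP_eq]
    have : ((w q).factorial : ℝ) ≠ 0 := by positivity
    field_simp
    rfl
  -- final computation
  rw [cond_apply hmA, hPA, hPAB]
  have hSA : 0 < x ^ k / Zθ ^ n * (sigmaP φ k (n * θ) / k.factorial) := by
    have h1 : (0:ℝ) < k.factorial := by positivity
    positivity
  rw [← ENNReal.div_eq_inv_mul, ← ENNReal.ofReal_div_of_pos hSA]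
  congr 1
  rw [hBell]
  have hdesc : (n.descFactorial p : ℝ) = p.factorial * n.choose p := by
    rw [Nat.descFactorial_eq_factorial_mul_choose]
    push_cast
    ring
  rw [hdesc]
  have hk0 : (k.factorial : ℝ) ≠ 0 := by positivity
  have hp0 : (p.factorial : ℝ) ≠ 0 := by positivity
  have hx0 : x ^ k ≠ 0 := by positivity
  have hZ0 : Zθ ^ n ≠ 0 := by positivity
  have hσ0 : sigmaP φ k (n * θ) ≠ 0 := ne_of_gt hσpos
  field_simp
end

section
/- The falling factorial moments of the frequency counts satisfy: for nonnegative integers r_1,...,r_k with Σr_i = r ≤ n and Σ i·r_i = κ ≤ k, E[∏_{i=1}^k {A_{n,k}(i)}_{r_i}] = {n}_r {k}_κ (σ_{k-κ}((n-r)θ)/σ_k(nθ)) ∏_{i=1}^k (σ_i(θ)/i!)^{r_i}, where {m}_j denotes the falling factorial. -/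
open Finset

namespace Stmt13


lemma coeff_phi_pow_eq_zero (φ : ℕ → ℝ) {p l : ℕ} (h : p < l) :
    PowerSeries.coeff p (phiPS φ ^ l) = 0 := by
  have hX : (PowerSeries.X : PowerSeries ℝ) ∣ phiPS φ := by
    rw [PowerSeries.X_dvd_iff]
    simp [phiPS, PowerSeries.constantCoeff_mk]
  have : (PowerSeries.X : PowerSeries ℝ) ^ l ∣ (phiPS φ) ^ l := pow_dvd_pow_of_dvd hX l
  exact (PowerSeries.X_pow_dvd_iff.mp this) p h

lemma coeff_phi_nonneg (φ : ℕ → ℝ) (hφ : ∀ m, 0 ≤ φ m) (p : ℕ) :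
    0 ≤ PowerSeries.coeff p (phiPS φ) := by
  rw [phiPS, PowerSeries.coeff_mk]
  split
  · exact le_refl 0
  · exact div_nonneg (hφ p) (by positivity)

lemma coeff_phi_pow_nonneg (φ : ℕ → ℝ) (hφ : ∀ m, 0 ≤ φ m) (l p : ℕ) :
    0 ≤ PowerSeries.coeff p (phiPS φ ^ l) := by
  induction l generalizing p with
  | zero => simp [PowerSeries.coeff_one]; positivity
  | succ l ih =>
      rw [pow_succ, PowerSeries.coeff_mul]
      apply Finset.sum_nonneg
      intro q _
      exact mul_nonneg (ih q.1) (coeff_phi_nonneg φ hφ q.2)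

lemma coeff_phi_pow_self (φ : ℕ → ℝ) (hφ : ∀ m, 0 ≤ φ m) (k : ℕ) :
    (φ 1) ^ k ≤ PowerSeries.coeff k (phiPS φ ^ k) := by
  induction k with
  | zero => simp
  | succ k ih =>
      have hc : PowerSeries.coeff (k+1) (phiPS φ ^ (k+1))
          = ∑ q ∈ Finset.HasAntidiagonal.antidiagonal (k+1),
              PowerSeries.coeff q.1 (phiPS φ ^ k) * PowerSeries.coeff q.2 (phiPS φ) := by
        rw [pow_succ, PowerSeries.coeff_mul]
      rw [hc]
      have hmem : ((k : ℕ), (1 : ℕ)) ∈ Finset.HasAntidiagonal.antidiagonal (k + 1) := by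
        simp
      have h1 : PowerSeries.coeff 1 (phiPS φ) = φ 1 := by
        simp [phiPS, PowerSeries.coeff_mk]
      calc (φ 1) ^ (k+1) = (φ 1) ^ k * φ 1 := by ring
        _ ≤ PowerSeries.coeff k (phiPS φ ^ k) * PowerSeries.coeff 1 (phiPS φ) := by
            rw [h1]; exact mul_le_mul_of_nonneg_right ih (hφ 1) |>.trans
              (mul_le_mul_of_nonneg_right le_rfl (hφ 1))
        _ ≤ ∑ q ∈ Finset.HasAntidiagonal.antidiagonal (k+1),
              PowerSeries.coeff q.1 (phiPS φ ^ k) * PowerSeries.coeff q.2 (phiPS φ) := by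
            apply Finset.single_le_sum (f := fun q =>
              PowerSeries.coeff q.1 (phiPS φ ^ k) * PowerSeries.coeff q.2 (phiPS φ)) ?_ hmem
            intro q _
            exact mul_nonneg (coeff_phi_pow_nonneg φ hφ k q.1) (coeff_phi_nonneg φ hφ q.2)

noncomputable def G (φ : ℕ → ℝ) (a : ℝ) : PowerSeries ℝ :=
  PowerSeries.mk fun j => ∑ l ∈ Finset.range (j + 1),
    a ^ l / l.factorial * PowerSeries.coeff j (phiPS φ ^ l)

lemma sigmaP_eq_coeff_G (φ : ℕ → ℝ) (k : ℕ) (a : ℝ) :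
    sigmaP φ k a = (k.factorial : ℝ) * PowerSeries.coeff k (G φ a) := by
  rw [sigmaP, G, PowerSeries.coeff_mk]

lemma coeff_G_ext (φ : ℕ → ℝ) (a : ℝ) {k N : ℕ} (h : k ≤ N) :
    PowerSeries.coeff k (G φ a)
      = ∑ l ∈ Finset.range (N + 1), a ^ l / l.factorial * PowerSeries.coeff k (phiPS φ ^ l) := by
  rw [G, PowerSeries.coeff_mk]
  apply Finset.sum_subset
  · exact Finset.range_subset_range.mpr (by omega)
  · intro l _ hl
    rw [Finset.mem_range, not_lt] at hl
    rw [coeff_phi_pow_eq_zero φ (by omega), mul_zero]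


lemma add_pow_div_factorial (a b : ℝ) (s : ℕ) :
    (a + b) ^ s / s.factorial
      = ∑ l ∈ Finset.range (s + 1),
          a ^ l / l.factorial * (b ^ (s - l) / (s - l).factorial) := by
  rw [add_pow, Finset.sum_div]
  apply Finset.sum_congr rfl
  intro l hl
  rw [Finset.mem_range] at hl
  have hls : l ≤ s := by omega
  have hfac : ((s.choose l : ℝ)) * l.factorial * (s - l).factorial = s.factorial := by
    exact_mod_cast Nat.choose_mul_factorial_mul_factorial hls
  have h1 : (l.factorial : ℝ) ≠ 0 := by positivity
  have h2 : ((s - l).factorial : ℝ) ≠ 0 := by positivity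
  have h3 : (s.factorial : ℝ) ≠ 0 := by positivity
  field_simp
  linear_combination (a ^ l * b ^ (s - l)) * hfac

lemma G_mul (φ : ℕ → ℝ) (a b : ℝ) : G φ a * G φ b = G φ (a + b) := by
  ext k
  rw [PowerSeries.coeff_mul]
  have step1 : ∀ p ∈ Finset.HasAntidiagonal.antidiagonal k,
      PowerSeries.coeff p.1 (G φ a) * PowerSeries.coeff p.2 (G φ b)
        = ∑ l ∈ Finset.range (k+1), ∑ m ∈ Finset.range (k+1),
            a ^ l / l.factorial * (b ^ m / m.factorial)
              * (PowerSeries.coeff p.1 (phiPS φ ^ l) * PowerSeries.coeff p.2 (phiPS φ ^ m)) := by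
    intro p hp
    rw [Finset.HasAntidiagonal.mem_antidiagonal] at hp
    rw [coeff_G_ext φ a (show p.1 ≤ k by omega), coeff_G_ext φ b (show p.2 ≤ k by omega),
      Finset.sum_mul_sum]
    apply Finset.sum_congr rfl; intro l _
    apply Finset.sum_congr rfl; intro m _
    ring
  rw [Finset.sum_congr rfl step1]
  rw [Finset.sum_comm]
  have step2 : ∀ l ∈ Finset.range (k+1),
      (∑ p ∈ Finset.HasAntidiagonal.antidiagonal k, ∑ m ∈ Finset.range (k+1),
        a ^ l / l.factorial * (b ^ m / m.factorial)
          * (PowerSeries.coeff p.1 (phiPS φ ^ l) * PowerSeries.coeff p.2 (phiPS φ ^ m)))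
      = ∑ m ∈ Finset.range (k+1),
          a ^ l / l.factorial * (b ^ m / m.factorial) * PowerSeries.coeff k (phiPS φ ^ (l + m)) := by
    intro l _
    rw [Finset.sum_comm]
    apply Finset.sum_congr rfl; intro m _
    rw [← Finset.mul_sum, pow_add, PowerSeries.coeff_mul]
  rw [Finset.sum_congr rfl step2]
  -- now LHS is double sum over range(k+1)²
  rw [← Finset.sum_product']
  rw [coeff_G_ext φ (a+b) (le_refl k)]
  have step3 : ∀ s ∈ Finset.range (k+1),
      (a + b) ^ s / s.factorial * PowerSeries.coeff k (phiPS φ ^ s)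
        = ∑ l ∈ Finset.range (s+1),
            a ^ l / l.factorial * (b ^ (s - l) / (s - l).factorial)
              * PowerSeries.coeff k (phiPS φ ^ s) := by
    intro s _
    rw [add_pow_div_factorial, Finset.sum_mul]
  rw [Finset.sum_congr rfl step3, Finset.sum_sigma']
  rw [← Finset.sum_filter_of_ne
    (p := fun p : ℕ × ℕ => p.1 + p.2 ≤ k)
    (f := fun p : ℕ × ℕ => a ^ p.1 / p.1.factorial * (b ^ p.2 / p.2.factorial)
      * PowerSeries.coeff k (phiPS φ ^ (p.1 + p.2)))
    (by
      intro p _ hne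
      by_contra hgt
      exact hne (by rw [coeff_phi_pow_eq_zero φ (show k < p.1 + p.2 by omega), mul_zero]))]
  apply Finset.sum_nbij' (i := fun p : ℕ × ℕ => (⟨p.1 + p.2, p.1⟩ : Σ _ : ℕ, ℕ))
    (j := fun q : Σ _ : ℕ, ℕ => (q.2, q.1 - q.2))
  · intro p hp
    simp only [Finset.mem_filter, Finset.mem_product, Finset.mem_range] at hp
    simp only [Finset.mem_sigma, Finset.mem_range]
    omega
  · intro q hq
    simp only [Finset.mem_sigma, Finset.mem_range] at hq
    simp only [Finset.mem_filter, Finset.mem_product, Finset.mem_range]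
    omega
  · intro p hp
    simp [Nat.add_sub_cancel_left]
  · intro q hq
    obtain ⟨sq, lq⟩ := q
    simp only [Finset.mem_sigma, Finset.mem_range] at hq
    refine Sigma.ext ?_ ?_
    · simp only; omega
    · simp only [heq_eq_eq]
  · intro p hp
    simp only
    rw [Nat.add_sub_cancel_left]


lemma G_zero (φ : ℕ → ℝ) : G φ 0 = 1 := by
  ext k
  rw [G, PowerSeries.coeff_mk, PowerSeries.coeff_one]
  rw [Finset.sum_eq_single 0]
  · simp
  · intro l _ hl
    rw [zero_pow hl, zero_div, zero_mul]
  · intro h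
    simp at h

lemma G_pow (φ : ℕ → ℝ) (a : ℝ) (n : ℕ) : (G φ a) ^ n = G φ (n * a) := by
  induction n with
  | zero => simp [G_zero φ]
  | succ n ih =>
      rw [pow_succ, ih, G_mul]
      congr 1
      push_cast
      ring

lemma sigmaP_zero (φ : ℕ → ℝ) (a : ℝ) : sigmaP φ 0 a = 1 := by
  simp [sigmaP]

lemma sigmaP_nonneg (φ : ℕ → ℝ) (hφ : ∀ m, 0 ≤ φ m) (k : ℕ) {a : ℝ} (ha : 0 ≤ a) :
    0 ≤ sigmaP φ k a := by
  rw [sigmaP]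
  apply mul_nonneg (by positivity)
  apply Finset.sum_nonneg
  intro l _
  exact mul_nonneg (by positivity) (coeff_phi_pow_nonneg φ hφ l k)

lemma sigmaP_pos (φ : ℕ → ℝ) (hφ1 : 0 < φ 1) (hφ : ∀ m, 0 ≤ φ m) (k : ℕ) {a : ℝ}
    (ha : 0 < a) : 0 < sigmaP φ k a := by
  rw [sigmaP]
  apply mul_pos (by positivity)
  have hk : k ∈ Finset.range (k+1) := by simp
  calc (0:ℝ) < a ^ k / k.factorial * (φ 1) ^ k := by positivity
    _ ≤ a ^ k / k.factorial * PowerSeries.coeff k (phiPS φ ^ k) := by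
        exact mul_le_mul_of_nonneg_left (coeff_phi_pow_self φ hφ k) (by positivity)
    _ ≤ ∑ l ∈ Finset.range (k + 1), a ^ l / l.factorial * PowerSeries.coeff k (phiPS φ ^ l) := by
        apply Finset.single_le_sum (f := fun l => a ^ l / l.factorial * PowerSeries.coeff k (phiPS φ ^ l)) ?_ hk
        intro l _
        exact mul_nonneg (by positivity) (coeff_phi_pow_nonneg φ hφ l k)

/-- coefficient of the one-box weight series. -/
lemma coeff_W_pow (φ : ℕ → ℝ) (θ x Zθ : ℝ) (hZ : Zθ ≠ 0) (n k : ℕ) :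
    PowerSeries.coeff k
        ((PowerSeries.mk fun j => sigmaP φ j θ * x ^ j / (Zθ * j.factorial)) ^ n)
      = sigmaP φ k (n * θ) * x ^ k / (Zθ ^ n * k.factorial) := by
  have hW : (PowerSeries.mk fun j => sigmaP φ j θ * x ^ j / (Zθ * j.factorial))
      = Zθ⁻¹ • PowerSeries.rescale x (G φ θ) := by
    ext j
    rw [PowerSeries.coeff_mk, PowerSeries.coeff_smul, PowerSeries.coeff_rescale,
      sigmaP_eq_coeff_G]
    have : (j.factorial : ℝ) ≠ 0 := by positivity
    field_simp
    rw [smul_eq_mul, one_div, mul_inv_cancel_left₀ hZ]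
  rw [hW, smul_pow, ← map_pow, G_pow, PowerSeries.coeff_smul, PowerSeries.coeff_rescale,
    sigmaP_eq_coeff_G]
  have : (k.factorial : ℝ) ≠ 0 := by positivity
  rw [smul_eq_mul]
  field_simp
  have hZn : (1 / Zθ) ^ n * Zθ ^ n = 1 := by rw [← mul_pow, one_div, inv_mul_cancel₀ hZ, one_pow]
  linear_combination (x ^ k * PowerSeries.coeff k (G φ (↑n * θ))) * hZn



noncomputable def SS (w : ℕ → ℝ) (n k : ℕ) : ℝ :=
  ∑ v ∈ Finset.Nat.antidiagonalTuple n k, ∏ m, w (v m)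

lemma peel {M : Type*} [AddCommMonoid M] (n K : ℕ) (f : (Fin (n+1) → ℕ) → M) :
    ∑ v ∈ Finset.Nat.antidiagonalTuple (n+1) K, f v
      = ∑ j ∈ Finset.range (K+1), ∑ u ∈ Finset.Nat.antidiagonalTuple n (K - j),
          f (Fin.cons j u) := by
  rw [← Finset.Nat.sum_antidiagonal_eq_sum_range_succ_mk
    (f := fun p : ℕ × ℕ => ∑ u ∈ Finset.Nat.antidiagonalTuple n p.2, f (Fin.cons p.1 u))]
  rw [Finset.sum_sigma']
  apply Finset.sum_nbij'
    (i := fun v => (⟨(v 0, ∑ i, v (Fin.succ i)), fun i => v (Fin.succ i)⟩ :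
      Σ _ : ℕ × ℕ, Fin n → ℕ))
    (j := fun q => Fin.cons q.1.1 q.2)
  · intro v hv
    rw [Finset.Nat.mem_antidiagonalTuple] at hv
    simp only [Finset.mem_sigma, Finset.HasAntidiagonal.mem_antidiagonal, Finset.Nat.mem_antidiagonalTuple]
    constructor
    · rw [← hv, Fin.sum_univ_succ]
    · trivial
  · intro q hq
    simp only [Finset.mem_sigma, Finset.HasAntidiagonal.mem_antidiagonal,
      Finset.Nat.mem_antidiagonalTuple] at hq
    rw [Finset.Nat.mem_antidiagonalTuple, Fin.sum_cons, hq.2, hq.1]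
  · intro v _
    exact Fin.cons_self_tail v
  · intro q hq
    simp only [Finset.mem_sigma, Finset.HasAntidiagonal.mem_antidiagonal,
      Finset.Nat.mem_antidiagonalTuple] at hq
    refine Sigma.ext ?_ (by simp)
    simp only [Fin.cons_zero, Fin.cons_succ]
    rw [hq.2]
  · intro v _
    exact (congrArg f (Fin.cons_self_tail v)).symm

lemma SS_zero (w : ℕ → ℝ) (k : ℕ) : SS w 0 k = if k = 0 then 1 else 0 := by
  cases k with
  | zero => simp [SS]
  | succ k => simp [SS]

lemma SS_succ (w : ℕ → ℝ) (n k : ℕ) :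
    SS w (n+1) k = ∑ j ∈ Finset.range (k+1), w j * SS w n (k - j) := by
  rw [SS, peel]
  apply Finset.sum_congr rfl
  intro j _
  rw [SS, Finset.mul_sum]
  apply Finset.sum_congr rfl
  intro u _
  rw [Fin.prod_univ_succ]
  simp

/-- `{c+1}_t = {c}_t + t * {c}_{t-1}` -/
lemma descFactorial_succ_left (c t : ℕ) :
    (c+1).descFactorial t = c.descFactorial t + t * c.descFactorial (t-1) := by
  cases t with
  | zero => simp
  | succ s =>
      rw [Nat.succ_descFactorial_succ, Nat.descFactorial_succ, Nat.succ_sub_one]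
      rcases Nat.lt_or_ge c s with h | h
      · rw [Nat.descFactorial_of_lt h]
        simp
      · have : c + 1 = (c - s) + (s + 1) := by omega
        rw [this, add_mul]

lemma cnt_cons (n : ℕ) (j i : ℕ) (u : Fin n → ℕ) :
    (Finset.univ.filter fun m : Fin (n+1) => Fin.cons (α := fun _ => ℕ) j u m = i).card
      = (if j = i then 1 else 0) + (Finset.univ.filter fun m => u m = i).card := by
  classical
  rw [Finset.card_filter, Finset.card_filter]
  rw [Fin.sum_univ_succ (f := fun m : Fin (n+1) => if Fin.cons (α := fun _ => ℕ) j u m = i then (1:ℕ) else 0)]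
  simp




def cnt {n : ℕ} (v : Fin n → ℕ) (i : ℕ) : ℕ := (Finset.univ.filter fun m => v m = i).card

lemma cnt_cons' (n : ℕ) (j i : ℕ) (u : Fin n → ℕ) :
    cnt (Fin.cons (α := fun _ => ℕ) j u) i = (if j = i then 1 else 0) + cnt u i := cnt_cons n j i u

lemma SS_conv (w : ℕ → ℝ) (m K κ : ℕ) :
    ∑ j ∈ Finset.range (K+1), w j * (if κ ≤ K - j then SS w m (K - j - κ) else 0)
      = if κ ≤ K then SS w (m+1) (K - κ) else 0 := by
  by_cases hκK : κ ≤ K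
  · rw [if_pos hκK, SS_succ]
    calc ∑ j ∈ Finset.range (K+1), w j * (if κ ≤ K - j then SS w m (K - j - κ) else 0)
        = ∑ j ∈ Finset.range (K - κ + 1), w j * (if κ ≤ K - j then SS w m (K - j - κ) else 0) := by
          refine (Finset.sum_subset (Finset.range_subset_range.mpr (by omega)) ?_).symm
          intro j hj hnj
          rw [Finset.mem_range] at hj hnj
          rw [if_neg (by omega), mul_zero]
      _ = ∑ j ∈ Finset.range (K - κ + 1), w j * SS w m (K - κ - j) := by
          apply Finset.sum_congr rfl
          intro j hj
          rw [Finset.mem_range] at hj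
          rw [if_pos (by omega)]
          congr 2
          omega
  · rw [if_neg hκK]
    apply Finset.sum_eq_zero
    intro j hj
    rw [Finset.mem_range] at hj
    rw [if_neg (by omega), mul_zero]

lemma sum_r_restrict (B K κ : ℕ) (r : ℕ → ℕ)
    (hκ : ∑ i ∈ Finset.Icc 1 B, i * r i = κ) (hκK : κ ≤ K) :
    ∑ j ∈ Finset.range (K+1), (if j ∈ Finset.Icc 1 B then r j else 0)
      = ∑ i ∈ Finset.Icc 1 B, r i := by
  rw [Finset.sum_ite_mem]
  apply Finset.sum_subset Finset.inter_subset_right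
  intro j hj hnj
  have hjr : j ∉ Finset.range (K+1) := fun h => hnj (Finset.mem_inter.mpr ⟨h, hj⟩)
  rw [Finset.mem_range, not_lt] at hjr
  by_contra hrj
  have h1 : j * r j ≤ κ := hκ ▸ Finset.single_le_sum (f := fun i => i * r i)
    (fun i _ => Nat.zero_le _) hj
  have h2 : 1 ≤ r j := Nat.one_le_iff_ne_zero.mpr hrj
  have h3 := Nat.le_mul_of_pos_right j h2
  omega

lemma bigN (w : ℕ → ℝ) (B : ℕ) :
    ∀ n K (r : ℕ → ℕ) (r0 κ : ℕ), (∑ i ∈ Finset.Icc 1 B, r i = r0) →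
      (∑ i ∈ Finset.Icc 1 B, i * r i = κ) →
    ∑ v ∈ Finset.Nat.antidiagonalTuple n K,
        (∏ i ∈ Finset.Icc 1 B, ((cnt v i).descFactorial (r i) : ℝ)) * ∏ m, w (v m)
      = (n.descFactorial r0 : ℝ) * (∏ i ∈ Finset.Icc 1 B, w i ^ r i) *
          (if κ ≤ K then SS w (n - r0) (K - κ) else 0) := by
  intro n
  induction n with
  | zero =>
      intro K r r0 κ hr hκ
      have hcnt0 : ∀ i, cnt (![] : Fin 0 → ℕ) i = 0 := by
        intro i; simp [cnt]
      by_cases hr0 : r0 = 0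
      · subst hr0
        have hall : ∀ i ∈ Finset.Icc 1 B, r i = 0 := fun i hi => (Finset.sum_eq_zero_iff.mp hr) i hi
        have hκ0 : κ = 0 := by
          rw [← hκ]; apply Finset.sum_eq_zero; intro i hi; rw [hall i hi, mul_zero]
        subst hκ0
        have hprod1 : (∏ i ∈ Finset.Icc 1 B, w i ^ r i) = 1 :=
          Finset.prod_eq_one fun i hi => by rw [hall i hi, pow_zero]
        cases K with
        | zero =>
            rw [Finset.Nat.antidiagonalTuple_zero_zero, Finset.sum_singleton, hprod1]
            have : (∏ i ∈ Finset.Icc 1 B, ((cnt (![] : Fin 0 → ℕ) i).descFactorial (r i) : ℝ)) = 1 :=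
              Finset.prod_eq_one fun i hi => by rw [hall i hi, Nat.descFactorial_zero, Nat.cast_one]
            rw [this, SS_zero]
            simp
        | succ K =>
            rw [Finset.Nat.antidiagonalTuple_zero_succ, Finset.sum_empty, SS_zero]
            rw [Nat.descFactorial_zero]
            simp
      · have hlt : 0 < r0 := Nat.pos_of_ne_zero hr0
        have hdf0 : (Nat.descFactorial 0 r0 : ℝ) = 0 := by
          rw [Nat.descFactorial_eq_zero_iff_lt.mpr hlt, Nat.cast_zero]
        rw [hdf0, zero_mul, zero_mul]
        have hex : ∃ i₀, i₀ ∈ Finset.Icc 1 B ∧ r i₀ ≠ 0 := by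
          by_contra h
          push_neg at h
          exact hr0 (by rw [← hr]; exact Finset.sum_eq_zero fun i hi => h i hi)
        obtain ⟨i₀, hi₀, hri₀⟩ := hex
        cases K with
        | zero =>
            rw [Finset.Nat.antidiagonalTuple_zero_zero, Finset.sum_singleton]
            have : ((cnt (![] : Fin 0 → ℕ) i₀).descFactorial (r i₀) : ℝ) = 0 := by
              rw [hcnt0, Nat.descFactorial_eq_zero_iff_lt.mpr (Nat.pos_of_ne_zero hri₀), Nat.cast_zero]
            rw [Finset.prod_eq_zero hi₀ this, zero_mul]
        | succ K =>
            rw [Finset.Nat.antidiagonalTuple_zero_succ, Finset.sum_empty]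
  | succ n IH =>
      intro K r r0 κ hr hκ
      have hjκall : ∀ j ∈ Finset.Icc 1 B, j * r j ≤ κ := fun j hj =>
        hκ ▸ Finset.single_le_sum (f := fun i => i * r i) (fun i _ => Nat.zero_le _) hj
      have hr0all : ∀ j ∈ Finset.Icc 1 B, r j ≤ r0 := fun j hj =>
        hr ▸ Finset.single_le_sum (fun i _ => Nat.zero_le _) hj
      rw [peel]
      have hwcons : ∀ j, ∀ u : Fin n → ℕ, (∏ m, w (Fin.cons (α := fun _ => ℕ) j u m)) = w j * ∏ m, w (u m) := by
        intro j u
        rw [Fin.prod_univ_succ]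
        simp
      have main : ∀ j ∈ Finset.range (K+1),
          (∑ u ∈ Finset.Nat.antidiagonalTuple n (K - j),
            (∏ i ∈ Finset.Icc 1 B, ((cnt (Fin.cons (α := fun _ => ℕ) j u) i).descFactorial (r i) : ℝ))
              * ∏ m, w (Fin.cons (α := fun _ => ℕ) j u m))
          = w j * ((n.descFactorial r0 : ℝ) * (∏ i ∈ Finset.Icc 1 B, w i ^ r i)
                * (if κ ≤ K - j then SS w (n - r0) (K - j - κ) else 0))
            + (if j ∈ Finset.Icc 1 B then (r j : ℝ) else 0) *
              ((n.descFactorial (r0 - 1) : ℝ) * (∏ i ∈ Finset.Icc 1 B, w i ^ r i)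
                * (if κ ≤ K then SS w (n + 1 - r0) (K - κ) else 0)) := by
        intro j hjr
        rw [Finset.mem_range] at hjr
        by_cases hjB : j ∈ Finset.Icc 1 B
        · by_cases hrj : r j = 0
          · -- r j = 0 : no marking at j
            have hsame : ∀ u : Fin n → ℕ,
                (∏ i ∈ Finset.Icc 1 B, ((cnt (Fin.cons (α := fun _ => ℕ) j u) i).descFactorial (r i) : ℝ))
                  = ∏ i ∈ Finset.Icc 1 B, ((cnt u i).descFactorial (r i) : ℝ) := by
              intro u
              apply Finset.prod_congr rfl
              intro i hi
              by_cases hij : j = i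
              · subst hij
                rw [hrj, Nat.descFactorial_zero, Nat.descFactorial_zero]
              · rw [cnt_cons', if_neg hij, zero_add]
            rw [if_pos hjB, hrj, Nat.cast_zero, zero_mul, add_zero]
            rw [Finset.sum_congr rfl fun u _ => by rw [hsame u, hwcons j u]]
            rw [Finset.sum_congr rfl fun u _ =>
              mul_left_comm (∏ i ∈ Finset.Icc 1 B, ((cnt u i).descFactorial (r i) : ℝ)) (w j) _]
            rw [← Finset.mul_sum, IH (K - j) r r0 κ hr hκ]
          · -- r j ≥ 1
            have hrj1 : 1 ≤ r j := Nat.one_le_iff_ne_zero.mpr hrj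
            have hjκ : j ≤ κ := le_trans (Nat.le_mul_of_pos_right j hrj1) (hjκall j hjB)
            have hr01 : 1 ≤ r0 := le_trans hrj1 (hr0all j hjB)
            set r' := Function.update r j (r j - 1) with hr'def
            have herase_r : ∀ i ∈ (Finset.Icc 1 B).erase j, r' i = r i := by
              intro i hi
              exact Function.update_of_ne (Finset.ne_of_mem_erase hi) _ _
            have hr'j : r' j = r j - 1 := Function.update_self _ _ _
            have hne_sdiff : ∀ i ∈ Finset.Icc 1 B \ {j}, i ≠ j := by
              intro i hi
              rw [Finset.mem_sdiff, Finset.mem_singleton] at hi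
              exact hi.2
            have hmul : j * (r j - 1) = j * r j - j := by
              rcases Nat.exists_eq_add_of_le hrj1 with ⟨c, hc⟩
              rw [hc, Nat.add_comm 1 c, Nat.add_sub_cancel, Nat.mul_add]
              omega
            have hsum1 : r0 = r j + ∑ i ∈ Finset.Icc 1 B \ {j}, r i := by
              rw [← hr]; exact Finset.sum_eq_add_sum_sdiff_singleton_of_mem hjB r
            have hsum2 : κ = j * r j + ∑ i ∈ Finset.Icc 1 B \ {j}, i * r i := by
              rw [← hκ]; exact Finset.sum_eq_add_sum_sdiff_singleton_of_mem hjB (fun i => i * r i)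
            have hr'sum : ∑ i ∈ Finset.Icc 1 B, r' i = r0 - 1 := by
              rw [hr'def, Finset.sum_update_of_mem hjB]
              omega
            have hκ'sum : ∑ i ∈ Finset.Icc 1 B, i * r' i = κ - j := by
              have h1 : ∑ i ∈ Finset.Icc 1 B, i * r' i
                  = j * (r j - 1) + ∑ i ∈ Finset.Icc 1 B \ {j}, i * r i := by
                rw [Finset.sum_eq_add_sum_sdiff_singleton_of_mem hjB (fun i => i * r' i), hr'j]
                congr 1
                apply Finset.sum_congr rfl
                intro i hi
                rw [hr'def, Function.update_of_ne (hne_sdiff i hi)]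
              have hjle : j ≤ j * r j := Nat.le_mul_of_pos_right j hrj1
              rw [h1, hmul]
              omega
            have hsplit : ∀ u : Fin n → ℕ,
                (∏ i ∈ Finset.Icc 1 B, ((cnt (Fin.cons (α := fun _ => ℕ) j u) i).descFactorial (r i) : ℝ))
                  = (∏ i ∈ Finset.Icc 1 B, ((cnt u i).descFactorial (r i) : ℝ))
                    + (r j : ℝ) * ∏ i ∈ Finset.Icc 1 B, ((cnt u i).descFactorial (r' i) : ℝ) := by
              intro u
              rw [← Finset.mul_prod_erase _
                (fun i => ((cnt (Fin.cons (α := fun _ => ℕ) j u) i).descFactorial (r i) : ℝ)) hjB]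
              rw [← Finset.mul_prod_erase _
                (fun i => ((cnt u i).descFactorial (r i) : ℝ)) hjB]
              rw [← Finset.mul_prod_erase _
                (fun i => ((cnt u i).descFactorial (r' i) : ℝ)) hjB]
              have e1 : (∏ i ∈ (Finset.Icc 1 B).erase j,
                  ((cnt (Fin.cons (α := fun _ => ℕ) j u) i).descFactorial (r i) : ℝ))
                  = ∏ i ∈ (Finset.Icc 1 B).erase j, ((cnt u i).descFactorial (r i) : ℝ) := by
                apply Finset.prod_congr rfl
                intro i hi
                rw [cnt_cons', if_neg (Ne.symm (Finset.ne_of_mem_erase hi)), zero_add]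
              have e2 : (∏ i ∈ (Finset.Icc 1 B).erase j,
                  ((cnt u i).descFactorial (r' i) : ℝ))
                  = ∏ i ∈ (Finset.Icc 1 B).erase j, ((cnt u i).descFactorial (r i) : ℝ) := by
                apply Finset.prod_congr rfl
                intro i hi
                rw [herase_r i hi]
              rw [e1, e2, cnt_cons', if_pos rfl, hr'j]
              rw [add_comm 1 (cnt u j), descFactorial_succ_left (cnt u j) (r j)]
              push_cast
              ring
            rw [Finset.sum_congr rfl fun u _ => by rw [hsplit u, hwcons j u]]
            rw [Finset.sum_congr rfl fun u _ => by
              show _ = w j * ((∏ i ∈ Finset.Icc 1 B, ((cnt u i).descFactorial (r i) : ℝ)) * ∏ m, w (u m))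
                + (w j * (r j : ℝ)) * ((∏ i ∈ Finset.Icc 1 B, ((cnt u i).descFactorial (r' i) : ℝ)) * ∏ m, w (u m))
              ring]
            rw [Finset.sum_add_distrib, ← Finset.mul_sum, ← Finset.mul_sum]
            rw [IH (K - j) r r0 κ hr hκ, IH (K - j) r' (r0 - 1) (κ - j) hr'sum hκ'sum]
            have hPw : w j * (∏ i ∈ Finset.Icc 1 B, w i ^ r' i) = ∏ i ∈ Finset.Icc 1 B, w i ^ r i := by
              rw [← Finset.mul_prod_erase _ (fun i => w i ^ r' i) hjB,
                ← Finset.mul_prod_erase _ (fun i => w i ^ r i) hjB,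
                Finset.prod_congr rfl fun i hi => by rw [herase_r i hi]]
              rw [hr'j, ← mul_assoc, ← pow_succ']
              congr 2
              omega
            have hif : (if κ - j ≤ K - j then SS w (n - (r0 - 1)) (K - j - (κ - j)) else 0)
                = (if κ ≤ K then SS w (n + 1 - r0) (K - κ) else 0) := by
              have h1 : n - (r0 - 1) = n + 1 - r0 := by omega
              have h2 : K - j - (κ - j) = K - κ := by omega
              rw [h1, h2]
              exact if_congr (by omega) rfl rfl
            rw [if_pos hjB, hif]
            ring_nf
            rw [← hPw]
            ring
        · rw [if_neg hjB, zero_mul, add_zero]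
          have hsame : ∀ u : Fin n → ℕ,
              (∏ i ∈ Finset.Icc 1 B, ((cnt (Fin.cons (α := fun _ => ℕ) j u) i).descFactorial (r i) : ℝ))
                = ∏ i ∈ Finset.Icc 1 B, ((cnt u i).descFactorial (r i) : ℝ) := by
            intro u
            apply Finset.prod_congr rfl
            intro i hi
            rw [cnt_cons', if_neg (by rintro rfl; exact hjB hi), zero_add]
          rw [Finset.sum_congr rfl fun u _ => by rw [hsame u, hwcons j u]]
          rw [Finset.sum_congr rfl fun u _ =>
            mul_left_comm (∏ i ∈ Finset.Icc 1 B, ((cnt u i).descFactorial (r i) : ℝ)) (w j) _]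
          rw [← Finset.mul_sum, IH (K - j) r r0 κ hr hκ]
      rw [Finset.sum_congr rfl main, Finset.sum_add_distrib]
      have part1 : ∑ j ∈ Finset.range (K+1),
          w j * ((n.descFactorial r0 : ℝ) * (∏ i ∈ Finset.Icc 1 B, w i ^ r i)
            * (if κ ≤ K - j then SS w (n - r0) (K - j - κ) else 0))
          = (n.descFactorial r0 : ℝ) * (∏ i ∈ Finset.Icc 1 B, w i ^ r i)
            * (if κ ≤ K then SS w (n - r0 + 1) (K - κ) else 0) := by
        rw [← SS_conv w (n - r0) K κ, Finset.mul_sum]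
        apply Finset.sum_congr rfl
        intro j _
        ring
      rw [part1]
      have part2 : ∑ j ∈ Finset.range (K+1), (if j ∈ Finset.Icc 1 B then (r j : ℝ) else 0)
          * ((n.descFactorial (r0 - 1) : ℝ) * (∏ i ∈ Finset.Icc 1 B, w i ^ r i)
            * (if κ ≤ K then SS w (n + 1 - r0) (K - κ) else 0))
          = (r0 : ℝ) * ((n.descFactorial (r0 - 1) : ℝ) * (∏ i ∈ Finset.Icc 1 B, w i ^ r i)
            * (if κ ≤ K then SS w (n + 1 - r0) (K - κ) else 0)) := by
        rw [← Finset.sum_mul]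
        by_cases hκK : κ ≤ K
        · congr 1
          have hnat := sum_r_restrict B K κ r hκ hκK
          rw [hr] at hnat
          calc ∑ j ∈ Finset.range (K+1), (if j ∈ Finset.Icc 1 B then (r j : ℝ) else 0)
              = ∑ j ∈ Finset.range (K+1), ((if j ∈ Finset.Icc 1 B then r j else 0 : ℕ) : ℝ) := by
                apply Finset.sum_congr rfl
                intro j _
                split <;> simp
            _ = ((∑ j ∈ Finset.range (K+1), if j ∈ Finset.Icc 1 B then r j else 0 : ℕ) : ℝ) :=
                (Nat.cast_sum _ _).symm
            _ = (r0 : ℝ) := by rw [hnat]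
        · rw [if_neg hκK, mul_zero, mul_zero, mul_zero]
      rw [part2]
      have hdf : (((n+1).descFactorial r0 : ℕ) : ℝ)
          = (n.descFactorial r0 : ℝ) + (r0 : ℝ) * (n.descFactorial (r0-1) : ℝ) := by
        rw [descFactorial_succ_left n r0]
        push_cast
        ring
      by_cases hr0n : r0 ≤ n
      · have hidx : n - r0 + 1 = n + 1 - r0 := by omega
        rw [hidx, hdf]
        ring
      · have hz : (n.descFactorial r0 : ℝ) = 0 := by
          rw [Nat.descFactorial_eq_zero_iff_lt.mpr (by omega), Nat.cast_zero]
        rw [hdf, hz]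
        ring


lemma SS_eq_coeff (w : ℕ → ℝ) (n k : ℕ) :
    SS w n k = PowerSeries.coeff k ((PowerSeries.mk w) ^ n) := by
  induction n generalizing k with
  | zero => rw [SS_zero, pow_zero, PowerSeries.coeff_one]
  | succ n ih =>
      rw [SS_succ, pow_succ', PowerSeries.coeff_mul,
        Finset.Nat.sum_antidiagonal_eq_sum_range_succ_mk]
      apply Finset.sum_congr rfl
      intro j _
      rw [PowerSeries.coeff_mk, ih]
lemma sigmaP_at_zero (φ : ℕ → ℝ) {k : ℕ} (hk : k ≠ 0) : sigmaP φ k 0 = 0 := by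
  rw [sigmaP]
  rw [Finset.sum_eq_single 0]
  · simp [PowerSeries.coeff_one, hk]
  · intro l _ hl
    rw [zero_pow hl, zero_div, zero_mul]
  · intro h
    simp at h


end Stmt13

open MeasureTheory ProbabilityTheory Stmt13

theorem stmt13 {Ω : Type*} [MeasurableSpace Ω] (P : Measure Ω) [IsProbabilityMeasure P]
    (φ : ℕ → ℝ) (hφ1 : 0 < φ 1) (hφ : ∀ m, 0 ≤ φ m)
    (θ x Zθ : ℝ) (hθ : 0 < θ) (hx : 0 < x) (hZ : 0 < Zθ)
    (n : ℕ) (ξ : Fin n → Ω → ℕ)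
    (hmeas : ∀ i, Measurable (ξ i))
    (hindep : iIndepFun ξ P)
    (hlaw : ∀ i j, P {ω | ξ i ω = j} =
      ENNReal.ofReal (sigmaP φ j θ * x ^ j / (Zθ * j.factorial)))
    (k : ℕ) (r : ℕ → ℕ) (r0 κ : ℕ)
    (hr : ∑ i ∈ Finset.Icc 1 k, r i = r0) (hr0 : r0 ≤ n)
    (hκ : ∑ i ∈ Finset.Icc 1 k, i * r i = κ) (hκk : κ ≤ k) :
    ∫ ω, ∏ i ∈ Finset.Icc 1 k,
        (((Finset.univ.filter fun m => ξ m ω = i).card.descFactorial (r i) : ℕ) : ℝ)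
        ∂(ProbabilityTheory.cond P {ω | ∑ i, ξ i ω = k}) =
      (n.descFactorial r0 : ℝ) * (k.descFactorial κ : ℝ) *
        (sigmaP φ (k - κ) (((n : ℝ) - r0) * θ) / sigmaP φ k (n * θ)) *
        ∏ i ∈ Finset.Icc 1 k, (sigmaP φ i θ / i.factorial) ^ r i := by
  classical
  by_cases hn : n = 0
  · -- degenerate case n = 0
    subst hn
    interval_cases r0
    have hsum0 : ∀ ω : Ω, (∑ i : Fin 0, ξ i ω) = 0 := fun ω => rfl
    by_cases hk : k = 0
    · subst hk
      have hSuniv : {ω : Ω | ∑ i, ξ i ω = 0} = Set.univ := by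
        ext ω; simp
      rw [hSuniv, ProbabilityTheory.cond_univ]
      have hIcc : Finset.Icc 1 0 = (∅ : Finset ℕ) := by decide
      have hκ0 : κ = 0 := by omega
      subst hκ0
      rw [hIcc]
      simp [sigmaP_zero φ]
    · have hSempty : {ω : Ω | ∑ i, ξ i ω = k} = (∅ : Set Ω) := by
        ext ω
        simp only [Set.mem_setOf_eq, Set.mem_empty_iff_false, iff_false]
        rw [hsum0 ω]
        exact fun h => hk h.symm
      rw [hSempty]
      unfold ProbabilityTheory.cond
      rw [Measure.restrict_empty, smul_zero, integral_zero_measure]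
      have : sigmaP φ k ((0:ℕ) * θ) = 0 := by
        rw [Nat.cast_zero, zero_mul]
        exact sigmaP_at_zero φ hk
      rw [this, div_zero, mul_zero, zero_mul]
  · -- main case n ≥ 1
    set w : ℕ → ℝ := fun j => sigmaP φ j θ * x ^ j / (Zθ * j.factorial) with hw
    have hw_nonneg : ∀ j, 0 ≤ w j := by
      intro j
      have := sigmaP_nonneg φ hφ j (le_of_lt hθ)
      positivity
    set c : ℕ → ENNReal := fun j => ENNReal.ofReal (w j) with hc
    set E : (Fin n → ℕ) → Set Ω := fun v => ⋂ i, ξ i ⁻¹' {v i} with hE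
    have hEmeas : ∀ v, MeasurableSet (E v) := fun v =>
      MeasurableSet.iInter fun i => hmeas i (measurableSet_singleton _)
    have hpre : ∀ (i : Fin n) (j : ℕ), ξ i ⁻¹' {j} = {ω | ξ i ω = j} := by
      intro i j; ext ω; simp
    have hEP : ∀ v, P (E v) = ∏ i, c (v i) := by
      intro v
      have h := (iIndepFun_iff_measure_inter_preimage_eq_mul.mp hindep) Finset.univ
        (sets := fun i => {v i}) (fun i _ => measurableSet_singleton _)
      have hEv : E v = ⋂ i ∈ Finset.univ, ξ i ⁻¹' {v i} := by
        simp [hE]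
      rw [hEv, h]
      apply Finset.prod_congr rfl
      intro i _
      rw [hpre i (v i), hlaw i (v i)]
    set S : Set Ω := {ω | ∑ i, ξ i ω = k} with hSdef
    have hSunion : S = ⋃ v ∈ Finset.Nat.antidiagonalTuple n k, E v := by
      ext ω
      simp only [hSdef, Set.mem_setOf_eq, Set.mem_iUnion, hE, Set.mem_iInter,
        Set.mem_preimage, Set.mem_singleton_iff, Finset.Nat.mem_antidiagonalTuple]
      constructor
      · intro h
        exact ⟨fun i => ξ i ω, h, fun i => rfl⟩
      · rintro ⟨v, hv, hvi⟩
        rw [← hv]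
        exact Finset.sum_congr rfl fun i _ => hvi i
    have hSmeas : MeasurableSet S := by
      rw [hSunion]
      exact Finset.measurableSet_biUnion _ fun v _ => hEmeas v
    have hdisj : (↑(Finset.Nat.antidiagonalTuple n k) : Set (Fin n → ℕ)).PairwiseDisjoint E := by
      intro v _ v' _ hvv'
      rw [Function.onFun, Set.disjoint_left]
      intro ω hωv hωv'
      apply hvv'
      funext i
      have h1 : ξ i ω = v i := by
        have := Set.mem_iInter.mp hωv i; simpa using this
      have h2 : ξ i ω = v' i := by
        have := Set.mem_iInter.mp hωv' i; simpa using this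
      rw [← h1, h2]
    have hPS : P S = ∑ v ∈ Finset.Nat.antidiagonalTuple n k, P (E v) := by
      rw [hSunion]
      exact measure_biUnion_finset hdisj fun v _ => hEmeas v
    have hEPreal : ∀ v : Fin n → ℕ, (P (E v)).toReal = ∏ i, w (v i) := by
      intro v
      rw [hEP v, ENNReal.toReal_prod]
      apply Finset.prod_congr rfl
      intro i _
      exact ENNReal.toReal_ofReal (hw_nonneg (v i))
    have hPSreal : (P S).toReal = SS w n k := by
      rw [hPS, ENNReal.toReal_sum (fun v _ => by
        rw [hEP v]
        exact (ENNReal.prod_lt_top (fun i _ => ENNReal.ofReal_lt_top)).ne)]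
      exact Finset.sum_congr rfl fun v _ => hEPreal v
    -- positivity of P S
    obtain ⟨n', rfl⟩ : ∃ n', n = n' + 1 := ⟨n - 1, by omega⟩
    have hwpos : ∀ j, 0 < w j := by
      intro j
      have h1 : 0 < sigmaP φ j θ := sigmaP_pos φ hφ1 hφ j hθ
      have h2 : (0:ℝ) < j.factorial := by positivity
      simp only [hw]
      positivity
    have hPSpos : P S ≠ 0 := by
      set v₀ : Fin (n' + 1) → ℕ := Fin.cons k 0 with hv₀
      have hv₀mem : v₀ ∈ Finset.Nat.antidiagonalTuple (n' + 1) k := by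
        rw [Finset.Nat.mem_antidiagonalTuple, hv₀, Fin.sum_cons]
        simp
      have hsub : E v₀ ⊆ S := by
        intro ω hω
        have : ∀ i, ξ i ω = v₀ i := fun i => by
          have := Set.mem_iInter.mp hω i; simpa using this
        show ∑ i, ξ i ω = k
        rw [Finset.sum_congr rfl fun i _ => this i]
        have := Finset.Nat.mem_antidiagonalTuple.mp hv₀mem
        exact this
      have hpos : 0 < P (E v₀) := by
        rw [hEP v₀]
        apply CanonicallyOrderedAdd.prod_pos.mpr
        intro i _
        exact ENNReal.ofReal_pos.mpr (hwpos (v₀ i))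
      exact fun h => absurd (measure_mono hsub) (by rw [h]; exact not_le.mpr (lt_of_lt_of_le hpos (le_refl _)) |>.elim)
    have hEsub : ∀ v ∈ Finset.Nat.antidiagonalTuple (n' + 1) k, E v ⊆ S := by
      intro v hv ω hω
      have hvi : ∀ i, ξ i ω = v i := fun i => by
        have := Set.mem_iInter.mp hω i; simpa using this
      show ∑ i, ξ i ω = k
      rw [Finset.sum_congr rfl fun i _ => hvi i]
      exact Finset.Nat.mem_antidiagonalTuple.mp hv
    set gR : (Fin (n' + 1) → ℕ) → ℝ :=
      fun v => ∏ i ∈ Finset.Icc 1 k, ((cnt v i).descFactorial (r i) : ℝ) with hgR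
    have hind : S.indicator (fun ω => ∏ i ∈ Finset.Icc 1 k,
        (((Finset.univ.filter fun m => ξ m ω = i).card.descFactorial (r i) : ℕ) : ℝ))
        = fun ω => ∑ v ∈ Finset.Nat.antidiagonalTuple (n' + 1) k,
            (E v).indicator (fun _ => gR v) ω := by
      funext ω
      by_cases hω : ω ∈ S
      · rw [Set.indicator_of_mem hω]
        have hmem : (fun i => ξ i ω) ∈ Finset.Nat.antidiagonalTuple (n' + 1) k :=
          Finset.Nat.mem_antidiagonalTuple.mpr hω
        rw [Finset.sum_eq_single_of_mem (fun i => ξ i ω) hmem ?_]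
        · rw [Set.indicator_of_mem (by
            apply Set.mem_iInter.mpr
            intro i
            simp)]
          rfl
        · intro v hv hne
          apply Set.indicator_of_notMem
          intro hωv
          apply hne
          funext i
          have h2 := Set.mem_iInter.mp hωv i
          have h3 : ξ i ω = v i := by simpa using h2
          exact h3.symm
      · rw [Set.indicator_of_notMem hω]
        symm
        apply Finset.sum_eq_zero
        intro v hv
        exact Set.indicator_of_notMem (fun hωv => hω (hEsub v hv hωv)) _
    have hcond : ProbabilityTheory.cond P S = (P S)⁻¹ • P.restrict S := rfl
    rw [hcond, integral_smul_measure, ← integral_indicator hSmeas, hind,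
      integral_finset_sum _ (fun v _ => (integrable_const (gR v)).indicator (hEmeas v))]
    have hints : ∀ v ∈ Finset.Nat.antidiagonalTuple (n' + 1) k,
        ∫ ω, (E v).indicator (fun _ => gR v) ω ∂P = gR v * (P (E v)).toReal := by
      intro v _
      rw [MeasureTheory.integral_indicator_const (gR v) (hEmeas v), smul_eq_mul]
      exact mul_comm _ _
    rw [Finset.sum_congr rfl hints]
    have hsum : ∑ v ∈ Finset.Nat.antidiagonalTuple (n' + 1) k, gR v * (P (E v)).toReal
        = ((n' + 1).descFactorial r0 : ℝ) * (∏ i ∈ Finset.Icc 1 k, w i ^ r i)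
          * SS w (n' + 1 - r0) (k - κ) := by
      rw [Finset.sum_congr rfl (fun v _ => by rw [hEPreal v])]
      have hb := bigN w k (n' + 1) k r r0 κ hr hκ
      rw [if_pos hκk] at hb
      exact hb
    rw [hsum, ENNReal.toReal_inv, hPSreal, smul_eq_mul]
    have hSSval : ∀ m t : ℕ, SS w m t
        = sigmaP φ t (m * θ) * x ^ t / (Zθ ^ m * t.factorial) := by
      intro m t
      rw [SS_eq_coeff]
      exact coeff_W_pow φ θ x Zθ (ne_of_gt hZ) m t
    have hPw : (∏ i ∈ Finset.Icc 1 k, w i ^ r i)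
        = (∏ i ∈ Finset.Icc 1 k, (sigmaP φ i θ / i.factorial) ^ r i) * x ^ κ * Zθ⁻¹ ^ r0 := by
      calc ∏ i ∈ Finset.Icc 1 k, w i ^ r i
          = ∏ i ∈ Finset.Icc 1 k,
              ((sigmaP φ i θ / i.factorial) ^ r i * (x ^ i) ^ r i * Zθ⁻¹ ^ r i) := by
            apply Finset.prod_congr rfl
            intro i _
            rw [← mul_pow, ← mul_pow]
            congr 1
            show w i = _
            simp only [hw]
            rw [div_eq_mul_inv, div_eq_mul_inv, mul_inv]
            ring
        _ = (∏ i ∈ Finset.Icc 1 k, (sigmaP φ i θ / i.factorial) ^ r i)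
            * (∏ i ∈ Finset.Icc 1 k, (x ^ i) ^ r i)
            * (∏ i ∈ Finset.Icc 1 k, Zθ⁻¹ ^ r i) := by
            rw [Finset.prod_mul_distrib, Finset.prod_mul_distrib]
        _ = _ := by
            congr 1
            · congr 1
              rw [← hκ]
              rw [Finset.prod_congr rfl (fun i _ => (pow_mul x i (r i)).symm)]
              exact Finset.prod_pow_eq_pow_sum _ _ _
            · rw [← hr]
              exact Finset.prod_pow_eq_pow_sum _ _ _
    rw [hSSval, hSSval, hPw]
    have hcast : ((n' + 1 - r0 : ℕ) : ℝ) = ((n' + 1 : ℕ) : ℝ) - (r0 : ℝ) := by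
      push_cast [hr0]
      ring
    rw [hcast]
    have hσ2 : 0 < sigmaP φ k (((n' + 1 : ℕ) : ℝ) * θ) := by
      apply sigmaP_pos φ hφ1 hφ k
      positivity
    have hxp : x ^ k = x ^ (k - κ) * x ^ κ := by
      rw [← pow_add]
      congr 1
      omega
    have hZp : Zθ ^ (n' + 1) = Zθ ^ (n' + 1 - r0) * Zθ ^ r0 := by
      rw [← pow_add]
      congr 1
      omega
    have hB : (k.factorial : ℝ) = (k.descFactorial κ : ℝ) * ((k - κ).factorial : ℝ) := by
      have hh := Nat.factorial_mul_descFactorial hκk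
      push_cast [← hh]
      ring
    rw [hxp, hZp, hB, inv_pow]
    have e1 : sigmaP φ k (((n' + 1 : ℕ) : ℝ) * θ) ≠ 0 := ne_of_gt hσ2
    have e2 : x ≠ 0 := ne_of_gt hx
    have e3 : Zθ ≠ 0 := ne_of_gt hZ
    have e4 : ((k - κ).factorial : ℝ) ≠ 0 := by positivity
    have key : ∀ σ1 σ2 A B D F xa xb Z1 Z2 : ℝ, σ2 ≠ 0 → F ≠ 0 → xa ≠ 0 → xb ≠ 0 →
        Z1 ≠ 0 → Z2 ≠ 0 →
        (σ2 * (xa * xb) / (Z1 * Z2 * (B * F)))⁻¹ * (A * (D * xb * (Z2)⁻¹) * (σ1 * xa / (Z1 * F)))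
          = A * B * (σ1 / σ2) * D := by
      intros σ1 σ2 A B D F xa xb Z1 Z2 h1 h2 h3 h4 h5 h6
      field_simp
    exact key _ _ _ _ _ _ _ _ _ _ e1 e4 (pow_ne_zero _ e2) (pow_ne_zero _ e2)
      (pow_ne_zero _ e3) (pow_ne_zero _ e3)
end
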